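/- Let Y be a topological space and let 𝔞 be an ideal of the polynomial ring A = MvPolynomial (Fin m) C(Y, ℝ) in m indeterminates over the ring of continuous real-valued functions on Y. Then there exists an open dense subset U ⊆ Y such that every x ∈ U has an open neighborhood V for which the ideal of MvPolynomial (Fin m) C(V, ℝ) generated by the images of the elements of 𝔞 under the coefficientwise restriction homomorphism is finitely generated. (Semi-Noetherian property: ideals of polynomial rings over rings of continuous functions are locally finitely generated over an open dense set.) -/

import Mathlib

/-- The restriction ring homomorphism `C(Y, ℝ) →+* C(V, ℝ)` for a subset `V ⊆ Y`. -/
def restrictHom {Y : Type*} [TopologicalSpace Y] (V : Set Y) :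
    C(Y, ℝ) →+* C(V, ℝ) where
  toFun f := f.restrict V
  map_one' := rfl
  map_mul' _ _ := rfl
  map_zero' := rfl
  map_add' _ _ := rfl

open MvPolynomial

section Division

variable {R : Type*} [CommRing R] {m : ℕ}

/-- Every nonzero multivariate polynomial has a `Lex`-largest monomial in its support. -/
lemma exists_top_monomial (p : MvPolynomial (Fin m) R) (hp : p ≠ 0) :
    ∃ τ ∈ p.support, ∀ ν ∈ p.support, toLex ν ≤ toLex τ := by
  classical
  have hne : (p.support.image (fun ν => toLex ν)).Nonempty :=
    (MvPolynomial.support_nonempty.2 hp).image _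
  obtain ⟨τ₀, hτ₀mem, hτ₀eq⟩ := Finset.mem_image.1 (Finset.max'_mem _ hne)
  refine ⟨τ₀, hτ₀mem, fun ν hν => ?_⟩
  rw [hτ₀eq]
  exact Finset.le_max' _ _ (Finset.mem_image_of_mem _ hν)

/-- Division with remainder by a family of polynomials with unit leading
coefficients (w.r.t. the lexicographic monomial order). -/
lemma division_lemma {n : ℕ} (g : Fin n → MvPolynomial (Fin m) R)
    (lm : Fin n → (Fin m →₀ ℕ))
    (hu : ∀ i, IsUnit ((g i).coeff (lm i)))
    (hs : ∀ i, ∀ ν ∈ (g i).support, toLex ν ≤ toLex (lm i))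
    (p : MvPolynomial (Fin m) R) :
    ∃ r : MvPolynomial (Fin m) R, p - r ∈ Ideal.span (Set.range g) ∧
      (r ≠ 0 → ∃ τ ∈ r.support,
        (∀ ν ∈ r.support, toLex ν ≤ toLex τ) ∧ ∀ i, ¬ lm i ≤ τ) := by
  classical
  suffices main : ∀ μ : Lex (Fin m →₀ ℕ), ∀ p : MvPolynomial (Fin m) R,
      (∀ ν ∈ p.support, toLex ν ≤ μ) → ∃ r, p - r ∈ Ideal.span (Set.range g) ∧
      (r ≠ 0 → ∃ τ ∈ r.support,
        (∀ ν ∈ r.support, toLex ν ≤ toLex τ) ∧ ∀ i, ¬ lm i ≤ τ) by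
    by_cases hp : p = 0
    · exact ⟨0, by simp [hp], by simp⟩
    · obtain ⟨τ, hτ, htop⟩ := exists_top_monomial p hp
      exact main (toLex τ) p htop
  intro μ
  induction μ using WellFoundedLT.induction with
  | _ μ IH =>
    intro p hp
    by_cases hp0 : p = 0
    · exact ⟨0, by simp [hp0], by simp⟩
    obtain ⟨τ, hτmem, hτtop⟩ := exists_top_monomial p hp0
    by_cases hdiv : ∃ i, lm i ≤ τ
    · obtain ⟨i, hi⟩ := hdiv
      obtain ⟨δ, hδ⟩ : ∃ δ, τ = δ + lm i := ⟨τ - lm i, (tsub_add_cancel_of_le hi).symm⟩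
      set u := (hu i).unit with hu_def
      set a : R := p.coeff τ * ↑u⁻¹ with ha
      set q := p - (monomial δ a) * g i with hq
      have hmem : p - q ∈ Ideal.span (Set.range g) := by
        rw [hq, sub_sub_cancel]
        exact Ideal.mul_mem_left _ _ (Ideal.subset_span ⟨i, rfl⟩)
      have hcq : q.coeff τ = 0 := by
        have h1 : ((monomial δ a) * g i).coeff τ = a * (g i).coeff (lm i) := by
          rw [hδ, coeff_monomial_mul]
        have h2 : a * (g i).coeff (lm i) = p.coeff τ := by
          have hgu : ((g i).coeff (lm i)) = ↑u := ((hu i).unit_spec).symm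
          rw [ha, hgu, mul_assoc, Units.inv_mul, mul_one]
        simp [hq, coeff_sub, h1, h2]
      have hqlt : ∀ ν ∈ q.support, toLex ν < toLex τ := by
        intro ν hν
        have hνne : ν ≠ τ := by
          intro h
          rw [h] at hν
          exact (MvPolynomial.mem_support_iff.1 hν) hcq
        have hνle : toLex ν ≤ toLex τ := by
          have hcν := MvPolynomial.mem_support_iff.1 hν
          rw [hq, coeff_sub] at hcν
          by_cases hν1 : p.coeff ν ≠ 0
          · exact hτtop ν (MvPolynomial.mem_support_iff.2 hν1)
          · push_neg at hν1
            have h3 : ((monomial δ a) * g i).coeff ν ≠ 0 := by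
              intro h
              apply hcν
              rw [hν1, h, sub_zero]
            rw [coeff_monomial_mul'] at h3
            by_cases hle : δ ≤ ν
            · rw [if_pos hle] at h3
              have h4 : (ν - δ) ∈ (g i).support := by
                rw [MvPolynomial.mem_support_iff]
                intro h
                apply h3
                rw [h, mul_zero]
              have h5 := hs i _ h4
              have h6 : toLex (ν - δ) + toLex δ
                  ≤ toLex (lm i) + toLex δ := add_le_add h5 le_rfl
              rw [← toLex_add, ← toLex_add] at h6
              rw [tsub_add_cancel_of_le hle] at h6
              rw [add_comm (lm i) δ] at h6
              rwa [← hδ] at h6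
            · rw [if_neg hle] at h3
              exact absurd rfl h3
        exact lt_of_le_of_ne hνle (fun h => hνne (toLex.injective h))
      by_cases hq0 : q = 0
      · refine ⟨0, ?_, by simp⟩
        rw [sub_zero]
        have : p = p - q := by rw [hq0, sub_zero]
        rw [this]
        exact hmem
      · obtain ⟨τq, hτqmem, hτqtop⟩ := exists_top_monomial q hq0
        have hlt : toLex τq < μ :=
          lt_of_lt_of_le (hqlt τq hτqmem) (hp τ hτmem)
        obtain ⟨r, hr1, hr2⟩ := IH (toLex τq) hlt q hτqtop
        refine ⟨r, ?_, hr2⟩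
        have : p - r = (p - q) + (q - r) := by ring
        rw [this]
        exact Ideal.add_mem _ hmem hr1
    · push_neg at hdiv
      exact ⟨p, by simp, fun _ => ⟨τ, hτmem, hτtop, hdiv⟩⟩

end Division

section Restriction

variable {Y : Type*} [TopologicalSpace Y]

/-- Restriction between nested subsets. -/
def resHom {V W : Set Y} (h : W ⊆ V) : C(V, ℝ) →+* C(W, ℝ) where
  toFun f := f.comp ⟨Set.inclusion h, continuous_inclusion h⟩
  map_one' := rfl
  map_mul' _ _ := rfl
  map_zero' := rfl
  map_add' _ _ := rfl

lemma resHom_comp_restrictHom {V W : Set Y} (h : W ⊆ V) :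
    (resHom h).comp (restrictHom V) = restrictHom W :=
  RingHom.ext fun f => ContinuousMap.ext fun _ => rfl

lemma ideal_map_res (m : ℕ) (𝔞 : Ideal (MvPolynomial (Fin m) C(Y, ℝ)))
    {V W : Set Y} (h : W ⊆ V) :
    Ideal.map (MvPolynomial.map (σ := Fin m) (resHom h))
        (Ideal.map (MvPolynomial.map (σ := Fin m) (restrictHom V)) 𝔞)
      = Ideal.map (MvPolynomial.map (σ := Fin m) (restrictHom W)) 𝔞 := by
  rw [Ideal.map_map]
  congr 1
  refine RingHom.ext fun p => ?_
  rw [RingHom.comp_apply, MvPolynomial.map_map, resHom_comp_restrictHom]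

lemma isUnit_of_nonvanishing {Z : Type*} [TopologicalSpace Z] (c : C(Z, ℝ))
    (h : ∀ z, c z ≠ 0) : IsUnit c := by
  refine IsUnit.of_mul_eq_one (a := c) ⟨fun z => (c z)⁻¹, c.continuous.inv₀ h⟩ ?_
  ext z
  exact mul_inv_cancel₀ (h z)

end Restriction

section Key

variable {Y : Type*} [TopologicalSpace Y]

/-- Key lemma: inside any nonempty open set there is a nonempty open subset on which
the restriction of `𝔞` is finitely generated. -/
lemma key_lemma (m : ℕ) (𝔞 : Ideal (MvPolynomial (Fin m) C(Y, ℝ)))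
    (O : Set Y) (hO : IsOpen O) (hne : O.Nonempty) :
    ∃ V : Set Y, IsOpen V ∧ V.Nonempty ∧ V ⊆ O ∧
      (Ideal.map (MvPolynomial.map (σ := Fin m) (restrictHom V)) 𝔞).FG := by
  classical
  -- The set of "achievable" monomial ideals over ℚ
  set S : Set (Ideal (MvPolynomial (Fin m) ℚ)) :=
    {J | ∃ (V : Set Y) (n : ℕ) (g : Fin n → MvPolynomial (Fin m) C(V, ℝ))
        (lm : Fin n → (Fin m →₀ ℕ)),
      IsOpen V ∧ V.Nonempty ∧ V ⊆ O ∧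
      (∀ i, g i ∈ Ideal.map (MvPolynomial.map (σ := Fin m) (restrictHom V)) 𝔞) ∧
      (∀ i, IsUnit ((g i).coeff (lm i))) ∧
      (∀ i, ∀ ν ∈ (g i).support, toLex ν ≤ toLex (lm i)) ∧
      J = Ideal.span (Set.range fun i => monomial (lm i) (1 : ℚ))} with hS
  have hSne : S.Nonempty := by
    refine ⟨Ideal.span (Set.range fun i : Fin 0 => monomial (Fin.elim0 i) (1 : ℚ)),
      O, 0, Fin.elim0, Fin.elim0, hO, hne, subset_rfl,
      fun i => i.elim0, fun i => i.elim0, fun i => i.elim0, rfl⟩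
  obtain ⟨J, hJS, hJmax⟩ :=
    (set_has_maximal_iff_noetherian.mpr (by infer_instance)) S hSne
  obtain ⟨V, n, g, lm, hVopen, hVne, hVsub, hgmem, hgu, hgs, hJeq⟩ := hJS
  refine ⟨V, hVopen, hVne, hVsub, ?_⟩
  have hspan : Ideal.map (MvPolynomial.map (σ := Fin m) (restrictHom V)) 𝔞
      = Ideal.span (Set.range g) := by
    refine le_antisymm ?_ (Ideal.span_le.2 (Set.range_subset_iff.2 hgmem))
    intro p hp
    obtain ⟨r, hr1, hr2⟩ := division_lemma g lm hgu hgs p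
    by_cases hr0 : r = 0
    · rw [hr0, sub_zero] at hr1
      exact hr1
    -- If the remainder is nonzero, we can construct a strictly larger monomial ideal,
    -- contradicting maximality of J.
    exfalso
    obtain ⟨τ, hτmem, hτtop, hτnd⟩ := hr2 hr0
    have hrmem : r ∈ Ideal.map (MvPolynomial.map (σ := Fin m) (restrictHom V)) 𝔞 := by
      have : r = p - (p - r) := by ring
      rw [this]
      exact Ideal.sub_mem _ hp
        ((Ideal.span_le.2 (Set.range_subset_iff.2 hgmem)) hr1)
    set c : C(V, ℝ) := r.coeff τ with hc
    have hcne : c ≠ 0 := MvPolynomial.mem_support_iff.1 hτmem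
    have hz : ∃ z : V, c z ≠ 0 := by
      by_contra h
      push_neg at h
      exact hcne (ContinuousMap.ext fun z => h z)
    set S₀ : Set V := {z : V | c z ≠ 0} with hS₀def
    have hS₀open : IsOpen S₀ := isOpen_compl_singleton.preimage c.continuous
    set W : Set Y := Subtype.val '' S₀ with hWdef
    have hWopen : IsOpen W := hVopen.isOpenMap_subtype_val S₀ hS₀open
    have hWV : W ⊆ V := by
      rintro _ ⟨z, _, rfl⟩
      exact z.2
    have hWne : W.Nonempty := by
      obtain ⟨z, hz⟩ := hz
      exact ⟨z.1, z, hz, rfl⟩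
    -- the new family over W
    set ρ := MvPolynomial.map (σ := Fin m) (resHom hWV) with hρ
    set g' : Fin (n + 1) → MvPolynomial (Fin m) C(W, ℝ) :=
      Fin.cons (ρ r) (fun i => ρ (g i)) with hg'
    set lm' : Fin (n + 1) → (Fin m →₀ ℕ) := Fin.cons τ lm with hlm'
    have hmemW : ∀ x, x ∈ Ideal.map (MvPolynomial.map (σ := Fin m) (restrictHom V)) 𝔞 →
        ρ x ∈ Ideal.map (MvPolynomial.map (σ := Fin m) (restrictHom W)) 𝔞 := by
      intro x hx
      rw [← ideal_map_res m 𝔞 hWV]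
      exact Ideal.mem_map_of_mem _ hx
    have hρcoeff : ∀ (x : MvPolynomial (Fin m) C(V, ℝ)) (ν : Fin m →₀ ℕ),
        (ρ x).coeff ν = resHom hWV (x.coeff ν) := fun x ν => MvPolynomial.coeff_map _ _ _
    have hcW : IsUnit ((ρ r).coeff τ) := by
      rw [hρcoeff]
      refine isUnit_of_nonvanishing _ fun w => ?_
      obtain ⟨z, hz, hzw⟩ := w.2
      have : Set.inclusion hWV w = z := Subtype.ext hzw.symm
      show c (Set.inclusion hWV w) ≠ 0
      rw [this]
      exact hz
    have hsupp : ∀ (x : MvPolynomial (Fin m) C(V, ℝ)), (ρ x).support ⊆ x.support :=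
      fun x => MvPolynomial.support_map_subset _ _
    -- the new monomial ideal
    set J' : Ideal (MvPolynomial (Fin m) ℚ) :=
      Ideal.span (Set.range fun i => monomial (lm' i) (1 : ℚ)) with hJ'
    have hJ'S : J' ∈ S := by
      refine ⟨W, n + 1, g', lm', hWopen, hWne, fun y hy => hVsub (hWV hy), ?_, ?_, ?_, rfl⟩
      · intro i
        refine Fin.cases ?_ ?_ i
        · exact hmemW r hrmem
        · intro j
          simp only [hg', Fin.cons_succ]
          exact hmemW _ (hgmem j)
      · intro i
        refine Fin.cases ?_ ?_ i
        · simpa [hg', hlm'] using hcW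
        · intro j
          simp only [hg', hlm', Fin.cons_succ]
          rw [hρcoeff]
          exact (hgu j).map _
      · intro i
        refine Fin.cases ?_ ?_ i
        · simp only [hg', hlm', Fin.cons_zero]
          intro ν hν
          exact hτtop ν (hsupp r hν)
        · intro j
          simp only [hg', hlm', Fin.cons_succ]
          intro ν hν
          exact hgs j ν (hsupp _ hν)
    have hle : J ≤ J' := by
      rw [hJeq, hJ']
      refine Ideal.span_mono ?_
      rintro _ ⟨i, rfl⟩
      exact ⟨i.succ, by simp [hlm']⟩
    have hmemJ' : monomial τ (1 : ℚ) ∈ J' :=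
      Ideal.subset_span ⟨0, by simp [hlm']⟩
    have hnotJ : monomial τ (1 : ℚ) ∉ J := by
      rw [hJeq]
      have hcomp : (fun i => monomial (lm i) (1 : ℚ))
          = (fun s => monomial s (1 : ℚ)) ∘ lm := rfl
      rw [hcomp, Set.range_comp]
      intro hmem
      have := MvPolynomial.mem_ideal_span_monomial_image.1 hmem τ (by
        rw [MvPolynomial.support_monomial]
        simp)
      obtain ⟨si, ⟨i, rfl⟩, hle'⟩ := this
      exact hτnd i hle'
    exact hJmax J' hJ'S (lt_of_le_of_ne hle (fun h => hnotJ (h ▸ hmemJ')))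
  rw [hspan]
  exact Submodule.fg_span (Set.finite_range g)

end Key

/-- semi-Noetherian property: for any ideal `𝔞` of the polynomial ring
`MvPolynomial (Fin m) C(Y, ℝ)` over the ring of continuous functions on a topological
space `Y`, there is an open dense set `U ⊆ Y` such that every `x ∈ U` has an open
neighborhood `V` on which the restriction of `𝔞` (the ideal generated by the images of
elements of `𝔞` under coefficientwise restriction) is finitely generated. -/
theorem stmt9 {Y : Type*} [TopologicalSpace Y] (m : ℕ)
    (𝔞 : Ideal (MvPolynomial (Fin m) C(Y, ℝ))) :
    ∃ U : Set Y, IsOpen U ∧ Dense U ∧ ∀ x ∈ U, ∃ V : Set Y, IsOpen V ∧ x ∈ V ∧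
      (Ideal.map (MvPolynomial.map (σ := Fin m) (restrictHom V)) 𝔞).FG := by
  classical
  set 𝒱 : Set (Set Y) := {V | IsOpen V ∧
    (Ideal.map (MvPolynomial.map (σ := Fin m) (restrictHom V)) 𝔞).FG} with h𝒱
  refine ⟨⋃₀ 𝒱, isOpen_sUnion fun V hV => hV.1, ?_, ?_⟩
  · rw [dense_iff_inter_open]
    intro O hO hOne
    obtain ⟨V, hVopen, hVne, hVsub, hVfg⟩ := key_lemma m 𝔞 O hO hOne
    obtain ⟨x, hx⟩ := hVne
    exact ⟨x, hVsub hx, Set.mem_sUnion.2 ⟨V, ⟨hVopen, hVfg⟩, hx⟩⟩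
  · intro x hx
    obtain ⟨V, ⟨hVopen, hVfg⟩, hxV⟩ := Set.mem_sUnion.1 hx
    exact ⟨V, hVopen, hxV, hVfg⟩
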